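/- Let Σ be a d×d positive definite matrix, V an h×h positive definite matrix, a ∈ ℝ^h, and z ∈ ℝ^{dh}. Then ‖z‖_{Σ⁻¹ ⊗ (a aᵀ)} ≤ ‖a‖_{V⁻¹} · ‖z‖_{Σ⁻¹ ⊗ V}, i.e. √( zᵀ(Σ⁻¹ ⊗ a aᵀ)z ) ≤ √(aᵀV⁻¹a) · √( zᵀ(Σ⁻¹ ⊗ V)z ). -/

import Mathlib

open Matrix Kronecker

private lemma kron_posSemidef {m n : ℕ} {A : Matrix (Fin m) (Fin m) ℝ}
    {B : Matrix (Fin n) (Fin n) ℝ} (hA : A.PosSemidef) (hB : B.PosSemidef) :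
    (A ⊗ₖ B).PosSemidef := by
  exact hA.kronecker hB

private lemma vecMulVec_mulVec' {n : ℕ} (a x : Fin n → ℝ) :
    vecMulVec a a *ᵥ x = (a ⬝ᵥ x) • a := by
  ext i
  simp only [mulVec, dotProduct, vecMulVec_apply, Pi.smul_apply, smul_eq_mul,
    Finset.sum_mul]
  exact Finset.sum_congr rfl fun j _ => by ring

private lemma quad_vecMulVec {n : ℕ} (a x : Fin n → ℝ) :
    x ⬝ᵥ (vecMulVec a a *ᵥ x) = (a ⬝ᵥ x) ^ 2 := by
  rw [vecMulVec_mulVec', dotProduct_smul, smul_eq_mul, dotProduct_comm, pow_two]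

private lemma dot_cs {n : ℕ} (v w : Fin n → ℝ) :
    (v ⬝ᵥ w) ^ 2 ≤ (v ⬝ᵥ v) * (w ⬝ᵥ w) := by
  simpa [dotProduct, pow_two] using
    Finset.sum_mul_sq_le_sq_mul_sq Finset.univ v w

open scoped MatrixOrder in
private lemma cs_matrix {n : ℕ} {V : Matrix (Fin n) (Fin n) ℝ} (hV : V.PosDef)
    (a x : Fin n → ℝ) :
    (a ⬝ᵥ x) ^ 2 ≤ (a ⬝ᵥ V⁻¹ *ᵥ a) * (x ⬝ᵥ V *ᵥ x) := by
  set W := CFC.sqrt V with hWdef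
  have hWt : Wᵀ = W := by
    rw [← conjTranspose_eq_transpose_of_trivial]; exact (CFC.sqrt_nonneg V).posSemidef.1
  have hWW : W * W = V := CFC.sqrt_mul_sqrt_self V hV.posSemidef.nonneg
  have quad : ∀ p q : Fin n → ℝ, (W *ᵥ p) ⬝ᵥ (W *ᵥ q) = (V *ᵥ p) ⬝ᵥ q := by
    intro p q
    rw [dotProduct_mulVec, ← mulVec_transpose, hWt, mulVec_mulVec, hWW]
  set u := V⁻¹ *ᵥ a with hu
  have hVu : V *ᵥ u = a := by
    rw [hu, mulVec_mulVec, mul_nonsing_inv V hV.det_pos.ne'.isUnit, one_mulVec]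
  have h1 : (W *ᵥ u) ⬝ᵥ (W *ᵥ x) = a ⬝ᵥ x := by rw [quad, hVu]
  have h2 : (W *ᵥ u) ⬝ᵥ (W *ᵥ u) = a ⬝ᵥ V⁻¹ *ᵥ a := by
    rw [quad, hVu, hu]
  have h3 : (W *ᵥ x) ⬝ᵥ (W *ᵥ x) = x ⬝ᵥ V *ᵥ x := by
    rw [quad, dotProduct_comm]
  calc (a ⬝ᵥ x) ^ 2 = ((W *ᵥ u) ⬝ᵥ (W *ᵥ x)) ^ 2 := by rw [h1]
    _ ≤ ((W *ᵥ u) ⬝ᵥ (W *ᵥ u)) * ((W *ᵥ x) ⬝ᵥ (W *ᵥ x)) := dot_cs _ _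
    _ = (a ⬝ᵥ V⁻¹ *ᵥ a) * (x ⬝ᵥ V *ᵥ x) := by rw [h2, h3]

private lemma diff_psd {n : ℕ} {V : Matrix (Fin n) (Fin n) ℝ} (hV : V.PosDef)
    (a : Fin n → ℝ) :
    ((a ⬝ᵥ V⁻¹ *ᵥ a) • V - vecMulVec a a).PosSemidef := by
  refine PosSemidef.of_dotProduct_mulVec_nonneg ?_ ?_
  · have h1 : (vecMulVec a a).IsHermitian := by
      rw [IsHermitian, conjTranspose_eq_transpose_of_trivial]
      ext i j
      simp [vecMulVec_apply, transpose_apply, mul_comm]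
    have h2 : ((a ⬝ᵥ V⁻¹ *ᵥ a) • V).IsHermitian := by
      rw [IsHermitian, conjTranspose_smul, hV.1]
      simp
    exact h2.sub h1
  · intro x
    have hx : star x = x := by simp
    rw [hx, sub_mulVec, dotProduct_sub, smul_mulVec, dotProduct_smul,
      quad_vecMulVec, smul_eq_mul, sub_nonneg]
    exact cs_matrix hV a x

private lemma kron_sub {m n : ℕ} (A : Matrix (Fin m) (Fin m) ℝ)
    (B C : Matrix (Fin n) (Fin n) ℝ) :
    A ⊗ₖ (B - C) = A ⊗ₖ B - A ⊗ₖ C := by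
  ext ⟨i, i'⟩ ⟨j, j'⟩
  simp [kroneckerMap_apply, mul_sub]

/-- `‖z‖_{Σ⁻¹ ⊗ aaᵀ} ≤ ‖a‖_{V⁻¹} · ‖z‖_{Σ⁻¹ ⊗ V}` for `Σ` and `V` positive definite. -/
theorem kronecker_seminorm_le (d h : ℕ)
    (S : Matrix (Fin d) (Fin d) ℝ) (hS : S.PosDef)
    (V : Matrix (Fin h) (Fin h) ℝ) (hV : V.PosDef)
    (a : Fin h → ℝ) (z : Fin d × Fin h → ℝ) :
    Real.sqrt (z ⬝ᵥ (S⁻¹ ⊗ₖ Matrix.vecMulVec a a).mulVec z)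
      ≤ Real.sqrt (a ⬝ᵥ V⁻¹.mulVec a) * Real.sqrt (z ⬝ᵥ (S⁻¹ ⊗ₖ V).mulVec z) := by
  set c : ℝ := a ⬝ᵥ V⁻¹ *ᵥ a with hc
  have hSinv : S⁻¹.PosSemidef := hS.inv.posSemidef
  have hkey : z ⬝ᵥ (S⁻¹ ⊗ₖ vecMulVec a a) *ᵥ z ≤ c * (z ⬝ᵥ (S⁻¹ ⊗ₖ V) *ᵥ z) := by
    have h0 := (kron_posSemidef hSinv (diff_psd hV a)).dotProduct_mulVec_nonneg z
    rw [star_trivial] at h0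
    rw [kron_sub, kronecker_smul, sub_mulVec, dotProduct_sub, smul_mulVec,
      dotProduct_smul, smul_eq_mul, sub_nonneg] at h0
    exact h0
  have hR : 0 ≤ z ⬝ᵥ (S⁻¹ ⊗ₖ V) *ᵥ z := by
    have := (kron_posSemidef hSinv hV.posSemidef).dotProduct_mulVec_nonneg z
    rwa [star_trivial] at this
  calc Real.sqrt (z ⬝ᵥ (S⁻¹ ⊗ₖ vecMulVec a a) *ᵥ z)
      ≤ Real.sqrt (c * (z ⬝ᵥ (S⁻¹ ⊗ₖ V) *ᵥ z)) := Real.sqrt_le_sqrt hkey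
    _ = Real.sqrt c * Real.sqrt (z ⬝ᵥ (S⁻¹ ⊗ₖ V) *ᵥ z) := by
        have hc0 : 0 ≤ c := by
          have := hV.inv.posSemidef.dotProduct_mulVec_nonneg a
          rwa [star_trivial] at this
        exact Real.sqrt_mul hc0 _
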